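/- Let (M,g) be a Riemannian manifold with Levi-Civita connection ∇, θ a 1-form, and S a g-orthogonal involution of TM satisfying ∇_X S = SX⊙θ♯ − Sθ♯⊙X for all X, where (X⊙Y)(Z) = ⟨X,Z⟩Y + ⟨Y,Z⟩X. If P is a ∇-parallel g-orthogonal involution of TM and α := SP − PS, then for every vector field X: ∇_X α = PSX∧θ + Pθ∧SX − PX∧Sθ − PSθ∧X, where (U∧V)(Z) := ⟨U,Z⟩V − ⟨V,Z⟩U and θ is identified with θ♯. -/

import Mathlib

/-- Let `(M,g)` be a Riemannian manifold with Levi-Civita connection `∇`, `θ` a 1-form, and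
`S` a `g`-orthogonal involution of `TM` satisfying `∇_X S = SX⊙θ♯ − Sθ♯⊙X` for all `X`,
where `(X⊙Y)(Z) = ⟨X,Z⟩Y + ⟨Y,Z⟩X`. If `P` is a `∇`-parallel `g`-orthogonal involution of
`TM` and `α := SP − PS`, then for every vector field `X`:
`∇_X α = PSX∧θ + Pθ∧SX − PX∧Sθ − PSθ∧X`, where `(U∧V)(Z) := ⟨U,Z⟩V − ⟨V,Z⟩U` and
`θ` is identified with `θ♯`.

We model the geometry algebraically: `C` is the commutative ℝ-algebra of smooth functions,
`VF` the `C`-module of vector fields, `act` the derivation action, `g` the metric, `conn`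
the Levi-Civita connection, and `θs = θ♯`; `(∇_X α)(Y) = ∇_X(α Y) − α(∇_X Y)`. -/
theorem nabla_alpha_formula {C VF : Type*} [CommRing C] [Algebra ℝ C]
    [AddCommGroup VF] [Module C VF]
    (act : VF → C → C) (bracket : VF → VF → VF)
    (g : VF →ₗ[C] VF →ₗ[C] C) (conn : VF → VF → VF)
    (gsymm : ∀ X Y : VF, g X Y = g Y X)
    (conn_addY : ∀ X Y Z : VF, conn X (Y + Z) = conn X Y + conn X Z)
    (conn_smulY : ∀ (X : VF) (f : C) (Y : VF), conn X (f • Y) = act X f • Y + f • conn X Y)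
    (torsion_free : ∀ X Y : VF, conn X Y - conn Y X = bracket X Y)
    (conn_metric : ∀ X Y Z : VF, act X (g Y Z) = g (conn X Y) Z + g Y (conn X Z))
    (θs : VF) (S P : VF →ₗ[C] VF)
    (hSsym : ∀ X Y : VF, g (S X) Y = g X (S Y)) (hSinv : ∀ X : VF, S (S X) = X)
    (hPsym : ∀ X Y : VF, g (P X) Y = g X (P Y)) (hPinv : ∀ X : VF, P (P X) = X)
    (hPpar : ∀ X Y : VF, conn X (P Y) = P (conn X Y))
    (hSder : ∀ X Y : VF, conn X (S Y) - S (conn X Y) =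
      g (S X) Y • θs + g θs Y • S X - g (S θs) Y • X - g X Y • S θs) :
    ∀ X Y : VF,
      conn X (S (P Y) - P (S Y)) - (S (P (conn X Y)) - P (S (conn X Y))) =
        (g (P (S X)) Y • θs - g θs Y • P (S X))
        + (g (P θs) Y • S X - g (S X) Y • P θs)
        - (g (P X) Y • S θs - g (S θs) Y • P X)
        - (g (P (S θs)) Y • X - g X Y • P (S θs)) := by
  intro X Y
  have hzero : conn X 0 = 0 := by
    have h := conn_addY X 0 0
    rw [add_zero] at h
    exact right_eq_add.mp h
  have hsub : ∀ A B : VF, conn X (A - B) = conn X A - conn X B := by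
    intro A B
    have h := conn_addY X B (-B)
    rw [add_neg_cancel, hzero] at h
    have hneg : conn X (-B) = - conn X B := (neg_eq_of_add_eq_zero_right h.symm).symm
    rw [sub_eq_add_neg, conn_addY, hneg, sub_eq_add_neg]
  have h1 := hSder X (P Y)
  have h2 := hSder X Y
  have e1 : conn X (S (P Y)) =
      S (P (conn X Y)) + (g (S X) (P Y) • θs + g θs (P Y) • S X
        - g (S θs) (P Y) • X - g X (P Y) • S θs) := by
    rw [hPpar] at h1
    linear_combination (norm := abel) h1
  have e2 : conn X (P (S Y)) =
      P (S (conn X Y)) + (g (S X) Y • P θs + g θs Y • P (S X)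
        - g (S θs) Y • P X - g X Y • P (S θs)) := by
    have h3 : conn X (S Y) = S (conn X Y) + (g (S X) Y • θs + g θs Y • S X
        - g (S θs) Y • X - g X Y • S θs) := by
      linear_combination (norm := abel) h2
    rw [hPpar, h3, map_add, map_sub, map_sub, map_add, map_smul, map_smul,
      map_smul, map_smul]
  rw [hsub, e1, e2]
  have r1 : g (S X) (P Y) = g (P (S X)) Y := (hPsym (S X) Y).symm
  have r2 : g θs (P Y) = g (P θs) Y := (hPsym θs Y).symm
  have r3 : g (S θs) (P Y) = g (P (S θs)) Y := (hPsym (S θs) Y).symm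
  have r4 : g X (P Y) = g (P X) Y := (hPsym X Y).symm
  rw [r1, r2, r3, r4]
  abel
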